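/- Fix W, E, T₀, ρ > 0, Δ > 0 and a sampling period T_s with 0 < T_s < 1/(2W). If two signals x, y ∈ C_{W,E,T₀,ρ} satisfy [x(nT_s)]* = [y(nT_s)]* for every n ∈ ℤ, then their unfolded samples agree: x(nT_s) = y(nT_s) for all n ∈ ℤ. -/

import Mathlib

open MeasureTheory Real

/-- Modulo reduction: the unique element of `[-Δ/2, Δ/2)` congruent to `x` modulo `Δ`. -/
noncomputable def modStar (Δ x : ℝ) : ℝ := Δ * Int.fract ((x + Δ / 2) / Δ) - Δ / 2

/-- Modulo reduction of a complex number: real and imaginary parts are reduced separately. -/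
noncomputable def cmodStar (Δ : ℝ) (z : ℂ) : ℂ :=
  (modStar Δ z.re : ℂ) + (modStar Δ z.im : ℂ) * Complex.I

/-- The class `C_{W,E,T₀,ρ}` of finite-energy bandlimited signals with decaying tails. -/
def signalClass (W E T₀ ρ : ℝ) : Set (ℝ → ℂ) :=
  {x | ∃ X : ℝ → ℂ, MemLp X 2 volume ∧
    (∀ t : ℝ, x t = ∫ f in (-W)..W, X f * Complex.exp (2 * Real.pi * Complex.I * f * t)) ∧
    (∫ t : ℝ, ‖x t‖ ^ 2) ≤ E ∧
    ∀ t : ℝ, T₀ ≤ |t| → ‖x t‖ ≤ |t| ^ (-ρ)}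

lemma modStar_sub {Δ a b : ℝ} (hΔ : 0 < Δ) (h : modStar Δ a = modStar Δ b) :
    ∃ k : ℤ, a - b = Δ * k := by
  have hfr : Int.fract ((a + Δ / 2) / Δ) = Int.fract ((b + Δ / 2) / Δ) := by
    unfold modStar at h
    have h2 : Δ * Int.fract ((a + Δ / 2) / Δ) = Δ * Int.fract ((b + Δ / 2) / Δ) := by linarith
    exact mul_left_cancel₀ hΔ.ne' h2
  obtain ⟨z, hz⟩ := Int.fract_eq_fract.mp hfr
  refine ⟨z, ?_⟩
  have : (a + Δ / 2) / Δ - (b + Δ / 2) / Δ = (a - b) / Δ := by ring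
  rw [this] at hz
  field_simp at hz
  linarith

/-- norm of `exp (2πi f t)` is 1 -/
lemma norm_exp_two_pi (f t : ℝ) :
    ‖Complex.exp (2 * Real.pi * Complex.I * f * t)‖ = 1 := by
  have : (2 * (Real.pi : ℂ) * Complex.I * f * t) = ((2 * Real.pi * f * t : ℝ) : ℂ) * Complex.I := by
    push_cast; ring
  rw [show (2 * (Real.pi : ℂ) * Complex.I * (f : ℂ) * (t : ℂ)) =
      ((2 * Real.pi * f * t : ℝ) : ℂ) * Complex.I by push_cast; ring]
  exact Complex.norm_exp_ofReal_mul_I _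

set_option maxHeartbeats 1000000 in
/-- Above the Nyquist rate, if two signals in `C_{W,E,T₀,ρ}` have the same
modulo-`Δ`-reduced samples, then their unfolded samples agree. -/
theorem unfolded_samples_recovery
    (W E T₀ ρ Δ Ts : ℝ) (hW : 0 < W) (hE : 0 < E) (hT₀ : 0 < T₀) (hρ : 0 < ρ)
    (hΔ : 0 < Δ) (hTs : 0 < Ts) (hNyq : Ts < 1 / (2 * W))
    (x y : ℝ → ℂ) (hx : x ∈ signalClass W E T₀ ρ) (hy : y ∈ signalClass W E T₀ ρ)
    (hsamp : ∀ n : ℤ, cmodStar Δ (x (n * Ts)) = cmodStar Δ (y (n * Ts))) :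
    ∀ n : ℤ, x (n * Ts) = y (n * Ts) := by
  obtain ⟨X, hX2, hXrep, -, hXdec⟩ := hx
  obtain ⟨Y, hY2, hYrep, -, hYdec⟩ := hy
  set e : ℝ → ℝ → ℂ := fun f t => Complex.exp (2 * Real.pi * Complex.I * f * t) with he
  set L : ℝ := 1 / Ts with hLdef
  have hL : 0 < L := by positivity
  have h2WL : 2 * W < L := by
    have h1 : Ts * (2 * W) < 1 := (lt_div_iff₀ (by positivity)).mp hNyq
    rw [hLdef, lt_div_iff₀ hTs]
    nlinarith
  haveI : Fact (0 < L) := ⟨hL⟩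
  set a : ℝ := -(L / 2) with hadef
  have haL : a + L = L / 2 := by rw [hadef]; ring
  -- measurable representatives
  set X' := hX2.1.mk X with hX'def
  have hX'm : StronglyMeasurable X' := hX2.1.stronglyMeasurable_mk
  have hXX' : X =ᵐ[volume] X' := hX2.1.ae_eq_mk
  set Y' := hY2.1.mk Y with hY'def
  have hY'm : StronglyMeasurable Y' := hY2.1.stronglyMeasurable_mk
  have hYY' : Y =ᵐ[volume] Y' := hY2.1.ae_eq_mk
  set U : ℝ → ℂ := fun f => X' f - Y' f with hUdef
  have hUm : StronglyMeasurable U := hX'm.sub hY'm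
  have hU2 : MemLp U 2 volume := (hX2.ae_eq hXX').sub (hY2.ae_eq hYY')
  -- integrability
  have hIIgen : ∀ (V : ℝ → ℂ), MemLp V 2 volume → ∀ t : ℝ,
      IntervalIntegrable (fun f => V f * e f t) volume (-W) W := by
    intro V hV2 t
    rw [intervalIntegrable_iff]
    haveI : IsFiniteMeasure (volume.restrict (Set.uIoc (-W) W)) := by
      constructor
      rw [Measure.restrict_apply_univ]
      exact measure_Ioc_lt_top
    have hVint : IntegrableOn V (Set.uIoc (-W) W) volume :=
      (hV2.restrict (Set.uIoc (-W) W)).integrable (by norm_num)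
    have hcont : Continuous (fun f : ℝ => e f t) := by
      rw [he]
      exact (((continuous_const.mul Complex.continuous_ofReal).mul
        continuous_const)).cexp
    have h1 : Integrable (fun f => e f t * V f) (volume.restrict (Set.uIoc (-W) W)) :=
      hVint.bdd_mul hcont.aestronglyMeasurable (c := 1) (Filter.Eventually.of_forall fun f => le_of_eq (norm_exp_two_pi f t))
    exact h1.congr (Filter.Eventually.of_forall fun f => mul_comm _ _)
  -- representations with measurable representatives
  have hxrep' : ∀ t : ℝ, x t = ∫ f in (-W)..W, X' f * e f t := by
    intro t
    rw [hXrep t]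
    apply intervalIntegral.integral_congr_ae
    filter_upwards [hXX'] with f hf
    intro _
    rw [hf]
  have hyrep' : ∀ t : ℝ, y t = ∫ f in (-W)..W, Y' f * e f t := by
    intro t
    rw [hYrep t]
    apply intervalIntegral.integral_congr_ae
    filter_upwards [hYY'] with f hf
    intro _
    rw [hf]
  have hs : ∀ m : ℤ, x (m * Ts) - y (m * Ts) = ∫ f in (-W)..W, U f * e f (m * Ts) := by
    intro m
    rw [hxrep' (m * Ts), hyrep' (m * Ts),
      ← intervalIntegral.integral_sub (hIIgen X' (hX2.ae_eq hXX') _)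
        (hIIgen Y' (hY2.ae_eq hYY') _)]
    apply intervalIntegral.integral_congr
    intro f _
    rw [hUdef]
    ring
  -- lattice property
  have hlat : ∀ m : ℤ, x (m * Ts) = y (m * Ts) ∨ Δ ≤ ‖x (m * Ts) - y (m * Ts)‖ := by
    intro m
    have h := hsamp m
    have hre : modStar Δ (x (m * Ts)).re = modStar Δ (y (m * Ts)).re := by
      have := congrArg Complex.re h
      simpa [cmodStar] using this
    have him : modStar Δ (x (m * Ts)).im = modStar Δ (y (m * Ts)).im := by
      have := congrArg Complex.im h
      simpa [cmodStar] using this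
    obtain ⟨k, hk⟩ := modStar_sub hΔ hre
    obtain ⟨l, hl⟩ := modStar_sub hΔ him
    by_cases hk0 : k = 0
    · by_cases hl0 : l = 0
      · left
        rw [hk0] at hk; rw [hl0] at hl
        apply Complex.ext
        · push_cast at hk; linarith
        · push_cast at hl; linarith
      · right
        have h1 : (1 : ℝ) ≤ |(l : ℝ)| := by
          have : (1 : ℤ) ≤ |l| := Int.one_le_abs (by exact_mod_cast hl0)
          exact_mod_cast this
        have h2 : |(x (m * Ts) - y (m * Ts)).im| = Δ * |(l : ℝ)| := by
          rw [Complex.sub_im, hl, abs_mul, abs_of_pos hΔ]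
        calc Δ = Δ * 1 := by ring
          _ ≤ Δ * |(l : ℝ)| := by nlinarith
          _ = |(x (m * Ts) - y (m * Ts)).im| := h2.symm
          _ ≤ ‖x (m * Ts) - y (m * Ts)‖ := Complex.abs_im_le_norm _
    · right
      have h1 : (1 : ℝ) ≤ |(k : ℝ)| := by
        have : (1 : ℤ) ≤ |k| := Int.one_le_abs (by exact_mod_cast hk0)
        exact_mod_cast this
      have h2 : |(x (m * Ts) - y (m * Ts)).re| = Δ * |(k : ℝ)| := by
        rw [Complex.sub_re, hk, abs_mul, abs_of_pos hΔ]
      calc Δ = Δ * 1 := by ring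
        _ ≤ Δ * |(k : ℝ)| := by nlinarith
        _ = |(x (m * Ts) - y (m * Ts)).re| := h2.symm
        _ ≤ ‖x (m * Ts) - y (m * Ts)‖ := Complex.abs_re_le_norm _
  -- eventually zero
  have hlarge : ∃ N : ℕ, ∀ m : ℤ, (N : ℤ) < |m| → x (m * Ts) = y (m * Ts) := by
    set R : ℝ := max T₀ ((2 / Δ) ^ (1 / ρ) + 1) with hRdef
    have hR0 : 0 < R := lt_of_lt_of_le hT₀ (le_max_left _ _)
    have hRbig : (2 / Δ) ^ (1 / ρ) < R := lt_of_lt_of_le (lt_add_one _) (le_max_right _ _)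
    have hRT0 : T₀ ≤ R := le_max_left _ _
    obtain ⟨N, hN⟩ := exists_nat_gt (R / Ts)
    refine ⟨N, fun m hm => ?_⟩
    have hmN : (N : ℝ) < |(m : ℝ)| := by
      have : ((N : ℤ) : ℝ) < (|m| : ℤ) := by exact_mod_cast hm
      rw [Int.cast_abs] at this
      exact_mod_cast this
    have hmR : R < |(m : ℝ)| * Ts := by
      have h1 : R / Ts * Ts < (N : ℝ) * Ts := by
        apply mul_lt_mul_of_pos_right hN hTs
      rw [div_mul_cancel₀ _ hTs.ne'] at h1
      nlinarith
    have habs : |(m : ℝ) * Ts| = |(m : ℝ)| * Ts := by rw [abs_mul, abs_of_pos hTs]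
    have hT0le : T₀ ≤ |(m : ℝ) * Ts| := by rw [habs]; linarith
    have hb : ‖x (m * Ts) - y (m * Ts)‖ ≤ 2 * |(m : ℝ) * Ts| ^ (-ρ) := by
      calc ‖x (m * Ts) - y (m * Ts)‖ ≤ ‖x (m * Ts)‖ + ‖y (m * Ts)‖ := norm_sub_le _ _
        _ ≤ |(m : ℝ) * Ts| ^ (-ρ) + |(m : ℝ) * Ts| ^ (-ρ) :=
            add_le_add (hXdec _ hT0le) (hYdec _ hT0le)
        _ = 2 * |(m : ℝ) * Ts| ^ (-ρ) := by ring
    have hsmall : 2 * |(m : ℝ) * Ts| ^ (-ρ) < Δ := by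
      have h1 : (2 / Δ) ^ (1 / ρ) < |(m : ℝ) * Ts| := by rw [habs]; linarith
      have hpos2 : (0 : ℝ) < 2 / Δ := by positivity
      have h2 : 2 / Δ < |(m : ℝ) * Ts| ^ ρ := by
        have h3 := Real.rpow_lt_rpow (Real.rpow_nonneg hpos2.le _) h1 hρ
        rwa [← Real.rpow_mul hpos2.le, one_div_mul_cancel hρ.ne', Real.rpow_one] at h3
      have h4 : |(m : ℝ) * Ts| ^ (-ρ) < (2 / Δ)⁻¹ := by
        rw [Real.rpow_neg (abs_nonneg _)]
        exact inv_strictAnti₀ hpos2 h2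
      have h5 : (2 / Δ)⁻¹ = Δ / 2 := by field_simp
      rw [h5] at h4
      linarith
    rcases hlat m with h | h
    · exact h
    · exfalso; linarith [lt_of_le_of_lt hb hsmall]
  obtain ⟨N, hN⟩ := hlarge
  -- lifted spectrum on the circle
  set Z : ℝ → ℂ := (Set.Icc (-W) W).indicator U with hZdef
  have hZm : StronglyMeasurable Z := hUm.indicator measurableSet_Icc
  have hZ2 : MemLp Z 2 volume := hU2.indicator measurableSet_Icc
  set G : AddCircle L → ℂ := AddCircle.liftIoc L a Z with hGdef
  have hGm : Measurable G := by
    have hGeq : G = (fun r : Set.Ioc a (a + L) => Z r) ∘ (AddCircle.measurableEquivIoc L a) := rfl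
    rw [hGeq]
    exact (hZm.measurable.comp measurable_subtype_coe).comp
      (AddCircle.measurableEquivIoc L a).measurable
  have hGcoe : ∀ r ∈ Set.Ioc a (a + L), G ↑r = Z r := fun r hr => AddCircle.liftIoc_coe_apply hr
  have hGZ : (G ∘ (QuotientAddGroup.mk : ℝ → AddCircle L))
      =ᵐ[volume.restrict (Set.Ioc a (a + L))] Z := by
    filter_upwards [ae_restrict_mem measurableSet_Ioc] with r hr using hGcoe r hr
  have hGvol : MemLp G 2 (volume : Measure (AddCircle L)) := by
    refine ⟨hGm.aestronglyMeasurable, ?_⟩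
    rw [← eLpNorm_comp_measurePreserving hGm.aestronglyMeasurable
      (AddCircle.measurePreserving_mk L a), eLpNorm_congr_ae hGZ]
    exact lt_of_le_of_lt (eLpNorm_mono_measure _ Measure.restrict_le_self) hZ2.2
  have hhaar : (AddCircle.haarAddCircle : Measure (AddCircle L))
      = (ENNReal.ofReal L)⁻¹ • (volume : Measure (AddCircle L)) := by
    rw [AddCircle.volume_eq_smul_haarAddCircle, smul_smul, ENNReal.inv_mul_cancel, one_smul]
    · exact (ENNReal.ofReal_pos.mpr hL).ne'
    · exact ENNReal.ofReal_ne_top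
  have hGh : MemLp G 2 AddCircle.haarAddCircle := by
    refine ⟨hGm.aestronglyMeasurable, ?_⟩
    rw [hhaar, eLpNorm_smul_measure_of_ne_top (by norm_num : (2 : ENNReal) ≠ ⊤)]
    rw [smul_eq_mul]
    exact ENNReal.mul_lt_top
      (ENNReal.rpow_lt_top_of_nonneg (by norm_num) (ENNReal.inv_ne_top.mpr
        (ENNReal.ofReal_pos.mpr hL).ne')) hGvol.2
  set c : ℤ → ℂ := fun n => fourierCoeff G n with hcdef
  -- Fourier coefficients of G are the samples
  have hWIoc : Set.Icc (-W) W ⊆ Set.Ioc a (a + L) := by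
    intro r hr
    rw [haL]
    constructor
    · rw [hadef]; have := hr.1; nlinarith
    · have := hr.2; nlinarith
  have hc : ∀ m : ℤ, c (-m) = Ts • (x (m * Ts) - y (m * Ts)) := by
    intro m
    show fourierCoeff G (-m) = Ts • (x (↑m * Ts) - y (↑m * Ts))
    rw [fourierCoeff_eq_intervalIntegral G (-m) a]
    have hab : a ≤ a + L := by linarith
    have h1 : (∫ r in a..a + L, (fourier (- -m) : C(AddCircle L, ℂ)) ↑r • G ↑r)
        = ∫ f in (-W)..W, U f * e f (m * Ts) := by
      rw [intervalIntegral.integral_of_le hab,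
        intervalIntegral.integral_of_le (by linarith : -W ≤ W)]
      have hind : ∀ r ∈ Set.Ioc a (a + L),
          (fourier (- -m) : C(AddCircle L, ℂ)) ↑r • G ↑r
          = (Set.Icc (-W) W).indicator (fun f => U f * e f (m * Ts)) r := by
        intro r hr
        rw [hGcoe r hr, hZdef]
        by_cases hmem : r ∈ Set.Icc (-W) W
        · rw [Set.indicator_of_mem hmem, Set.indicator_of_mem hmem, smul_eq_mul, mul_comm]
          congr 1
          rw [neg_neg, fourier_coe_apply, he]
          congr 1
          rw [hLdef]
          push_cast
          have hTsC : (Ts : ℂ) ≠ 0 := by exact_mod_cast hTs.ne'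
          field_simp
        · rw [Set.indicator_of_notMem hmem, Set.indicator_of_notMem hmem, smul_zero]
      rw [setIntegral_congr_fun measurableSet_Ioc hind,
        setIntegral_indicator measurableSet_Icc,
        Set.inter_eq_self_of_subset_right hWIoc,
        integral_Icc_eq_integral_Ioc]
    rw [h1, ← hs m, hLdef, one_div_one_div]
  -- coefficients vanish for large |n|
  have hcz : ∀ n : ℤ, (N : ℤ) < |n| → c n = 0 := by
    intro n hn
    have h1 := hc (-n)
    rw [neg_neg] at h1
    rw [h1, hN (-n) (by simpa [abs_neg] using hn), sub_self, smul_zero]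
  -- L² identification with a trigonometric polynomial
  set Glp := hGh.toLp G with hGlpdef
  have hrepr : ∀ i : ℤ, fourierCoeff (⇑Glp : AddCircle L → ℂ) i = c i := by
    intro i
    apply integral_congr_ae
    filter_upwards [hGh.coeFn_toLp] with t ht
    rw [ht]
  have hsum := hasSum_fourier_series_L2 (T := L) Glp
  simp_rw [hrepr] at hsum
  set F : Finset ℤ := Finset.Icc (-(N : ℤ)) (N : ℤ) with hFdef
  have hnotF : ∀ i : ℤ, i ∉ F → (N : ℤ) < |i| := by
    intro i hi
    rw [hFdef, Finset.mem_Icc] at hi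
    rw [Int.abs_eq_natAbs]
    omega
  have hfin : ∀ i ∉ F, c i • (fourierLp (T := L) 2 i) = 0 := by
    intro i hi
    rw [hcz i (hnotF i hi), zero_smul]
  have hGlpsum : Glp = ∑ i ∈ F, c i • fourierLp (T := L) 2 i :=
    hsum.unique (hasSum_sum_of_ne_finset_zero hfin)
  set Pc : C(AddCircle L, ℂ) := ∑ i ∈ F, c i • fourier i with hPcdef
  have hPcLp : (∑ i ∈ F, c i • fourierLp (T := L) 2 i)
      = ContinuousMap.toLp (E := ℂ) 2 AddCircle.haarAddCircle ℂ Pc := by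
    rw [hPcdef, map_sum]
    exact Finset.sum_congr rfl fun i _ => by rw [_root_.map_smul]
  have hGPc : G =ᵐ[AddCircle.haarAddCircle] ⇑Pc := by
    have h1 : ⇑Glp =ᵐ[AddCircle.haarAddCircle] G := hGh.coeFn_toLp
    have h2 : ⇑Glp =ᵐ[AddCircle.haarAddCircle] ⇑Pc := by
      rw [hGlpsum, hPcLp]
      exact ContinuousMap.coeFn_toLp _ _
    exact h1.symm.trans h2
  have hGPcvol : G =ᵐ[(volume : Measure (AddCircle L))] ⇑Pc := by
    rw [AddCircle.volume_eq_smul_haarAddCircle]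
    exact Measure.ae_smul_measure hGPc _
  have hZPc : Z =ᵐ[volume.restrict (Set.Ioc a (a + L))]
      (fun r : ℝ => Pc ↑r) := by
    have h3 : (G ∘ (QuotientAddGroup.mk : ℝ → AddCircle L))
        =ᵐ[volume.restrict (Set.Ioc a (a + L))]
        (⇑Pc ∘ (QuotientAddGroup.mk : ℝ → AddCircle L)) := by
      apply ae_eq_comp
      · exact (AddCircle.measurePreserving_mk L a).measurable.aemeasurable
      · rw [(AddCircle.measurePreserving_mk L a).map_eq]
        exact hGPcvol
    exact hGZ.symm.trans h3
  -- P vanishes on the gap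
  set S : Set ℝ := Set.Ioo W (L / 2) with hSdef
  have hSsub : S ⊆ Set.Ioc a (a + L) := by
    intro r hr
    rw [haL]
    refine ⟨?_, hr.2.le⟩
    rw [hadef]
    have h1 := hr.1
    linarith
  have hPc0 : ∀ᵐ (r : ℝ) ∂((volume : Measure ℝ).restrict S), (Pc ↑r : ℂ) = 0 := by
    have h4 := ae_restrict_of_ae_restrict_of_subset hSsub hZPc
    filter_upwards [h4, ae_restrict_mem measurableSet_Ioo] with r h1 h2
    rw [← h1, hZdef, Set.indicator_of_notMem]
    intro hmem
    exact absurd hmem.2 (not_le.mpr h2.1)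
  have hTinf : Set.Infinite {r ∈ S | Pc ↑r = 0} := by
    by_contra hfin2'
    rw [Set.not_infinite] at hfin2'
    have hfin2 := hfin2'
    have hb0 : volume {r : ℝ | ¬ (r ∈ S → Pc ↑r = 0)} = 0 := by
      have h5 := (ae_restrict_iff' measurableSet_Ioo).mp hPc0
      rw [ae_iff] at h5
      exact h5
    have hScover : S ⊆ {r ∈ S | Pc ↑r = 0} ∪ {r : ℝ | ¬ (r ∈ S → Pc ↑r = 0)} := by
      intro r hr
      by_cases h : Pc ↑r = 0
      · exact Or.inl ⟨hr, h⟩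
      · exact Or.inr fun hh => h (hh hr)
    have hle : volume S ≤ 0 := by
      calc volume S ≤ volume ({r ∈ S | Pc ↑r = 0} ∪ {r : ℝ | ¬ (r ∈ S → Pc ↑r = 0)}) :=
            measure_mono hScover
        _ ≤ volume {r ∈ S | Pc ↑r = 0} + volume {r : ℝ | ¬ (r ∈ S → Pc ↑r = 0)} :=
            measure_union_le _ _
        _ = 0 := by rw [hfin2.countable.measure_zero, hb0, add_zero]
    have hSpos : (0 : ENNReal) < volume S := by
      rw [hSdef, Real.volume_Ioo]
      exact ENNReal.ofReal_pos.mpr (by linarith)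
    exact absurd (le_antisymm hle zero_le) hSpos.ne'
  -- polynomial argument
  set Q : Polynomial ℂ := ∑ i ∈ F, Polynomial.C (c i) * Polynomial.X ^ (i + (N : ℤ)).toNat
    with hQdef
  have hQroot : ∀ r : ℝ, r ∈ S → Pc ↑r = 0 →
      Q.IsRoot (Complex.exp (2 * Real.pi * Complex.I * r * Ts)) := by
    intro r hr h0
    set z : ℂ := Complex.exp (2 * Real.pi * Complex.I * r * Ts) with hzdef
    have hz0 : z ≠ 0 := Complex.exp_ne_zero _
    rw [Polynomial.IsRoot, hQdef, Polynomial.eval_finset_sum]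
    simp only [Polynomial.eval_mul, Polynomial.eval_C, Polynomial.eval_pow, Polynomial.eval_X]
    have key : ∀ i ∈ F, c i * z ^ (i + (N : ℤ)).toNat
        = (c i * fourier i (↑r : AddCircle L)) * z ^ (N : ℕ) := by
      intro i hi
      rw [hFdef, Finset.mem_Icc] at hi
      have hge : 0 ≤ i + (N : ℤ) := by omega
      have h5 : z ^ ((i + (N : ℤ)).toNat) = z ^ (i + (N : ℤ)) := by
        rw [← zpow_natCast, Int.toNat_of_nonneg hge]
      rw [h5, zpow_add₀ hz0]
      have h6 : z ^ (i : ℤ) = fourier i (↑r : AddCircle L) := by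
        rw [hzdef, ← Complex.exp_int_mul, fourier_coe_apply]
        congr 1
        rw [hLdef]
        push_cast
        have hTsC : (Ts : ℂ) ≠ 0 := by exact_mod_cast hTs.ne'
        field_simp
      have h7 : z ^ ((N : ℤ)) = z ^ (N : ℕ) := by rw [zpow_natCast]
      rw [h6, h7]
      ring
    rw [Finset.sum_congr rfl key, ← Finset.sum_mul]
    have h8 : (∑ i ∈ F, c i * fourier i (↑r : AddCircle L)) = Pc ↑r := by
      rw [hPcdef]
      simp
    rw [h8, h0, zero_mul]
  have hinj : Set.InjOn (fun r : ℝ => Complex.exp (2 * Real.pi * Complex.I * r * Ts)) S := by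
    intro r1 hr1 r2 hr2 hexp
    simp only at hexp
    obtain ⟨n, hn⟩ := Complex.exp_eq_exp_iff_exists_int.mp hexp
    have h2pi : (2 : ℂ) * Real.pi * Complex.I ≠ 0 := by
      simp [Real.pi_ne_zero, Complex.I_ne_zero, Complex.ofReal_ne_zero]
    have h9 : (r1 : ℂ) * Ts = r2 * Ts + n := by
      have h10 : (2 : ℂ) * Real.pi * Complex.I * ((r1 : ℂ) * Ts)
          = 2 * Real.pi * Complex.I * ((r2 : ℂ) * Ts + n) := by
        linear_combination hn
      exact mul_left_cancel₀ h2pi h10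
    have h11 : r1 * Ts = r2 * Ts + n := by exact_mod_cast h9
    have h12 : |(n : ℝ)| < 1 := by
      have hd1 : r1 - r2 < L / 2 - W := by
        have := hr1.2; have := hr2.1; simp only [hSdef, Set.mem_Ioo] at hr1 hr2; linarith
      have hd2 : -(L / 2 - W) < r1 - r2 := by
        simp only [hSdef, Set.mem_Ioo] at hr1 hr2; linarith
      have habs2 : |r1 - r2| < L / 2 := by
        rw [abs_lt]; constructor <;> nlinarith
      have hneq : (n : ℝ) = (r1 - r2) * Ts := by nlinarith [h11]
      rw [hneq, abs_mul, abs_of_pos hTs]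
      calc |r1 - r2| * Ts < L / 2 * Ts := by
            exact mul_lt_mul_of_pos_right habs2 hTs
        _ = 1 / 2 := by rw [hLdef]; field_simp
        _ < 1 := by norm_num
    have hn0 : n = 0 := by
      have : |(n : ℝ)| = |n| := by rw [Int.cast_abs]
      rw [this] at h12
      have h13 : |n| < 1 := by exact_mod_cast h12
      have h14 := abs_lt.mp h13
      omega
    rw [hn0] at h11
    push_cast at h11
    have := mul_right_cancel₀ hTs.ne' (by linarith : r1 * Ts = r2 * Ts)
    exact this
  have hQ0 : Q = 0 := by
    apply Polynomial.eq_zero_of_infinite_isRoot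
    apply Set.Infinite.mono (s := (fun r : ℝ => Complex.exp (2 * Real.pi * Complex.I * r * Ts))
      '' {r ∈ S | Pc ↑r = 0})
    · rintro z ⟨r, ⟨hrS, hr0⟩, rfl⟩
      exact hQroot r hrS hr0
    · exact hTinf.image (hinj.mono (fun r hr => hr.1))
  have hcF : ∀ i ∈ F, c i = 0 := by
    intro i hi
    have h6 : Q.coeff ((i + (N : ℤ)).toNat) = c i := by
      rw [hQdef, Polynomial.finset_sum_coeff]
      rw [Finset.sum_eq_single i]
      · simp [Polynomial.coeff_C_mul, Polynomial.coeff_X_pow]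
      · intro j hj hne
        simp only [Polynomial.coeff_C_mul, Polynomial.coeff_X_pow]
        rw [if_neg, mul_zero]
        rw [hFdef, Finset.mem_Icc] at hj hi
        omega
      · intro h
        exact absurd hi h
    rw [hQ0, Polynomial.coeff_zero] at h6
    exact h6.symm
  have hall : ∀ n : ℤ, c n = 0 := by
    intro n
    by_cases h : n ∈ F
    · exact hcF n h
    · exact hcz n (hnotF n h)
  intro m
  have h8 := hc m
  rw [hall (-m)] at h8
  have h9 : Ts • (x (↑m * Ts) - y (↑m * Ts)) = 0 := h8.symm
  rcases smul_eq_zero.mp h9 with h | h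
  · exact absurd h hTs.ne'
  · exact sub_eq_zero.mp h
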